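/- Noise robustness for the pair-relation task (Corollary 3): Let d ≥ 2 and let P* be a no-signalling correlation with Alice inputs Fin X, Alice outputs {0,1}, Bob inputs Fin d, Bob outputs {0,1}, satisfying the PR-box restriction property: for every pair y' ≠ y'' in Fin d there exist x' ≠ x'' in Fin X and (α,β,γ) ∈ {0,1}³ such that for all x̂,ŷ,a,b ∈ {0,1}, P* x y a b = 1/2 if a ⊕ b = x̂·ŷ ⊕ α·x̂ ⊕ β·ŷ ⊕ γ and 0 otherwise (with x = x' when x̂ = 0, x = x'' when x̂ = 1, y = y' when ŷ = 0, y = y'' when ŷ = 1). Let P_WN be the white-noise correlation P_WN x y a b = 1/4. If 1/2 < p ≤ 1, then there exists a (p·P* + (1-p)·P_WN)-assisted wire-reading strategy for the pair-relation task on (d,2) (input set M = {R_{i j k l} = {(i,k),(j,l)} : i < j in Fin d, k,l ∈ Fin 2}, weights ω m = 1/(2d(d-1))) whose payoff equals p + (1-p)/2, which is strictly greater than 3/4 (the shared-randomness bound). -/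

import Mathlib

open Finset

/-- The input set of the pair-relation task on `(d,2)`: all relations
`R_{ijkl} = {(i,k),(j,l)}` with `i < j` in `Fin d` and `k,l ∈ Fin 2`. -/
def pairM (d : ℕ) : Finset (Finset (Fin d × Fin 2)) :=
  ((Finset.univ : Finset (Fin d × Fin d × Fin 2 × Fin 2)).filter
      (fun q => q.1 < q.2.1)).image
    (fun q => ({(q.1, q.2.2.1), (q.2.1, q.2.2.2)} : Finset (Fin d × Fin 2)))

/-- The payoff of the pair-relation task on `(d,2)` with uniform weights
`ω m = 1/(2d(d-1))`, for the wire-reading conditional distribution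
`𝒩 τ' n m = 𝒩(τ',n|m)`. -/
noncomputable def pairPayoff (d : ℕ)
    (𝒩 : Fin d → Fin 2 → Finset (Fin d × Fin 2) → ℝ) : ℝ :=
  ∑ m ∈ pairM d, ∑ p ∈ m,
    (1 / (2 * (d : ℝ) * ((d : ℝ) - 1))) * 𝒩 p.1 p.2 m

lemma pair_rel_aux {d : ℕ} {i j i' j' : Fin d} {k l k' l' : Fin 2}
    (hij : i < j) (hij' : i' < j')
    (h : ({(i, k), (j, l)} : Finset (Fin d × Fin 2)) = {(i', k'), (j', l')}) :
    i = i' ∧ j = j' ∧ k = k' ∧ l = l' := by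
  have h1 : ((i, k) : Fin d × Fin 2) ∈ ({(i', k'), (j', l')} : Finset (Fin d × Fin 2)) := by
    rw [← h]; simp
  have h2 : ((j, l) : Fin d × Fin 2) ∈ ({(i', k'), (j', l')} : Finset (Fin d × Fin 2)) := by
    rw [← h]; simp
  simp only [Finset.mem_insert, Finset.mem_singleton, Prod.mk.injEq] at h1 h2
  rcases h1 with ⟨e1, e2⟩ | ⟨e1, e2⟩ <;> rcases h2 with ⟨f1, f2⟩ | ⟨f1, f2⟩
  · rw [e1.trans f1.symm] at hij; exact absurd hij (lt_irrefl _)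
  · exact ⟨e1, f1, e2, f2⟩
  · rw [← f1, ← e1] at hij'; exact absurd hij (lt_asymm hij')
  · rw [e1.trans f1.symm] at hij; exact absurd hij (lt_irrefl _)

lemma pair_rel_card {d : ℕ} :
    ((Finset.univ : Finset (Fin d × Fin d × Fin 2 × Fin 2)).filter
      (fun q => q.1 < q.2.1)).card = 2 * (d * d - d) := by
  have hS : 2 * ((Finset.univ : Finset (Fin d × Fin d)).filter (fun q => q.1 < q.2)).card
      = d * d - d := by
    have hswap : ((Finset.univ : Finset (Fin d × Fin d)).filter (fun q => q.2 < q.1)).card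
        = ((Finset.univ : Finset (Fin d × Fin d)).filter (fun q => q.1 < q.2)).card := by
      apply Finset.card_bij' (fun q _ => Prod.swap q) (fun q _ => Prod.swap q) <;>
        simp [Finset.mem_filter]
    have hne : ((Finset.univ : Finset (Fin d × Fin d)).filter (fun q => q.1 ≠ q.2))
        = (Finset.univ : Finset (Fin d)).offDiag := by
      ext q; simp [Finset.mem_offDiag]
    have hcard : ((Finset.univ : Finset (Fin d × Fin d)).filter (fun q => q.1 ≠ q.2)).card
        = d * d - d := by
      rw [hne, Finset.offDiag_card]; simp
    have hor : ((Finset.univ : Finset (Fin d × Fin d)).filter (fun q => q.1 ≠ q.2))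
        = ((Finset.univ : Finset (Fin d × Fin d)).filter (fun q => q.1 < q.2)) ∪
          ((Finset.univ : Finset (Fin d × Fin d)).filter (fun q => q.2 < q.1)) := by
      rw [← Finset.filter_or]
      exact Finset.filter_congr fun q _ => by
        constructor
        · exact fun h => lt_or_gt_of_ne h
        · rintro (h | h) <;> [exact ne_of_lt h; exact (ne_of_lt h).symm]
    have hdisj : Disjoint
        ((Finset.univ : Finset (Fin d × Fin d)).filter (fun q => q.1 < q.2))
        ((Finset.univ : Finset (Fin d × Fin d)).filter (fun q => q.2 < q.1)) := by
      refine Finset.disjoint_left.2 fun q hq1 hq2 => ?_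
      simp only [Finset.mem_filter] at hq1 hq2
      exact absurd hq1.2 (lt_asymm hq2.2)
    rw [hor, Finset.card_union_of_disjoint hdisj, hswap] at hcard
    omega
  have hTS : ((Finset.univ : Finset (Fin d × Fin d × Fin 2 × Fin 2)).filter
      (fun q => q.1 < q.2.1)).card
      = 4 * ((Finset.univ : Finset (Fin d × Fin d)).filter (fun q => q.1 < q.2)).card := by
    simp only [Finset.card_filter, Fintype.sum_prod_type]
    rw [Finset.mul_sum]
    apply Finset.sum_congr rfl
    intro i _
    rw [Finset.mul_sum]
    apply Finset.sum_congr rfl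
    intro j _
    simp [Finset.sum_const]
    split <;> simp
  omega

/-- Noise robustness for the pair-relation task (Corollary 3): for `1/2 < p ≤ 1`,
the noisy correlation `p·P* + (1-p)·P_WN` admits a strategy with payoff
`p + (1-p)/2 > 3/4`. Addition and multiplication on `Fin 2` are mod 2. -/
theorem noisy_PR_advantage_pair_relation
    (d X : ℕ) (hd : 2 ≤ d)
    (Pstar : Fin X → Fin d → Fin 2 → Fin 2 → ℝ)
    (hP0 : ∀ x y a b, 0 ≤ Pstar x y a b)
    (hP1 : ∀ x y, ∑ a : Fin 2, ∑ b : Fin 2, Pstar x y a b = 1)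
    (hNSA : ∀ x a y₁ y₂, ∑ b : Fin 2, Pstar x y₁ a b = ∑ b : Fin 2, Pstar x y₂ a b)
    (hNSB : ∀ y b x₁ x₂, ∑ a : Fin 2, Pstar x₁ y a b = ∑ a : Fin 2, Pstar x₂ y a b)
    (hPR : ∀ y' y'' : Fin d, y' ≠ y'' →
      ∃ x' x'' : Fin X, x' ≠ x'' ∧ ∃ α β γ : Fin 2,
        ∀ xh yh a b : Fin 2,
          Pstar (if xh = 0 then x' else x'') (if yh = 0 then y' else y'') a b =
            if a + b = xh * yh + α * xh + β * yh + γ then 1 / 2 else 0)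
    (p : ℝ) (hp1 : 1 / 2 < p) (hp2 : p ≤ 1) :
    ∃ (px : Fin X → Finset (Fin d × Fin 2) → ℝ)
      (pe : Fin d → Fin 2 → Finset (Fin d × Fin 2) → ℝ)
      (py : Fin d → Fin d → ℝ)
      (pd : Fin 2 → Fin d → Fin 2 → ℝ),
      (∀ x m, 0 ≤ px x m) ∧ (∀ m, ∑ x : Fin X, px x m = 1) ∧
      (∀ τ' a m, 0 ≤ pe τ' a m) ∧ (∀ a m, ∑ τ' : Fin d, pe τ' a m = 1) ∧
      (∀ y τ', 0 ≤ py y τ') ∧ (∀ τ', ∑ y : Fin d, py y τ' = 1) ∧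
      (∀ n τ' b, 0 ≤ pd n τ' b) ∧ (∀ τ' b, ∑ n : Fin 2, pd n τ' b = 1) ∧
      pairPayoff d (fun τ' n m =>
        ∑ x : Fin X, ∑ a : Fin 2, ∑ y : Fin d, ∑ b : Fin 2,
          px x m * pe τ' a m * py y τ' *
            (p * Pstar x y a b + (1 - p) * (1 / 4)) * pd n τ' b)
        = p + (1 - p) / 2 ∧
      p + (1 - p) / 2 > 3 / 4 := by
  classical
  have hd2 : (2 : ℝ) ≤ (d : ℝ) := by exact_mod_cast hd
  -- a default element of Fin X
  obtain ⟨x0, x1', hx01, -⟩ :=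
    hPR ⟨0, by omega⟩ ⟨1, by omega⟩ (by simp [Fin.ext_iff])
  -- key choice: for each m, a tuple (xm, a0, i, j) implementing the strategy
  have key : ∀ m : Finset (Fin d × Fin 2),
      ∃ s : Fin X × Fin 2 × Fin d × Fin d,
        ∀ (i j : Fin d) (k l : Fin 2), i < j →
          m = {(i, k), (j, l)} →
          s.2.2.1 = i ∧ s.2.2.2 = j ∧
          Pstar s.1 i s.2.1 k = 1 / 2 ∧ Pstar s.1 j (s.2.1 + 1) l = 1 / 2 := by
    intro m
    by_cases hm : ∃ (i j : Fin d) (k l : Fin 2), i < j ∧ m = {(i, k), (j, l)}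
    · obtain ⟨i, j, k, l, hij, rfl⟩ := hm
      have hne : i ≠ j := ne_of_lt hij
      obtain ⟨x1, x2, hx12, α, β, γ, hbox⟩ := hPR i j hne
      refine ⟨⟨if k + l + β + 1 = 0 then x1 else x2,
        k + α * (k + l + β + 1) + γ, i, j⟩, ?_⟩
      intro i' j' k' l' hij' hmeq'
      obtain ⟨rfl, rfl, rfl, rfl⟩ := pair_rel_aux hij hij' hmeq'
      have L1 : ∀ k l a b c : Fin 2,
          (k + a * (k + l + b + 1) + c) + k
            = (k + l + b + 1) * 0 + a * (k + l + b + 1) + b * 0 + c := by decide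
      have L2 : ∀ k l a b c : Fin 2,
          (k + a * (k + l + b + 1) + c + 1) + l
            = (k + l + b + 1) * 1 + a * (k + l + b + 1) + b * 1 + c := by decide
      refine ⟨rfl, rfl, ?_, ?_⟩
      · have h := hbox (k + l + β + 1) 0 (k + α * (k + l + β + 1) + γ) k
        rw [if_pos rfl] at h
        rw [h, if_pos (L1 k l α β γ)]
      · have h := hbox (k + l + β + 1) 1 (k + α * (k + l + β + 1) + γ + 1) l
        rw [if_neg (by decide : ¬ (1 : Fin 2) = 0)] at h
        rw [h, if_pos (L2 k l α β γ)]
    · exact ⟨⟨x0, 0, ⟨0, by omega⟩, ⟨0, by omega⟩⟩,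
        fun i j k l hij hmeq => absurd ⟨i, j, k, l, hij, hmeq⟩ hm⟩
  choose sel hsel using key
  refine ⟨fun x m => if x = (sel m).1 then 1 else 0,
    fun τ' a m => if τ' = (if a = (sel m).2.1 then (sel m).2.2.1 else (sel m).2.2.2)
      then 1 else 0,
    fun y τ' => if y = τ' then 1 else 0,
    fun n τ' b => if n = b then 1 else 0,
    ?_, ?_, ?_, ?_, ?_, ?_, ?_, ?_, ?_, ?_⟩
  · intro x m; dsimp only; split <;> norm_num
  · intro m; simp
  · intro τ' a m; dsimp only; split <;> split <;> norm_num
  · intro a m; simp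
  · intro y τ'; dsimp only; split <;> norm_num
  · intro τ'; simp
  · intro n τ' b; dsimp only; split <;> norm_num
  · intro τ' b; simp
  · -- the payoff computation
    have hN : ∀ (m : Finset (Fin d × Fin 2)) (τ' : Fin d) (n : Fin 2),
        ∑ x : Fin X, ∑ a : Fin 2, ∑ y : Fin d, ∑ b : Fin 2,
          (if x = (sel m).1 then (1:ℝ) else 0) *
          (if τ' = (if a = (sel m).2.1 then (sel m).2.2.1 else (sel m).2.2.2) then 1 else 0) *
          (if y = τ' then 1 else 0) *
          (p * Pstar x y a b + (1 - p) * (1 / 4)) *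
          (if n = b then 1 else 0)
        = ∑ a : Fin 2,
            (if τ' = (if a = (sel m).2.1 then (sel m).2.2.1 else (sel m).2.2.2)
              then (1:ℝ) else 0) *
            (p * Pstar (sel m).1 τ' a n + (1 - p) * (1 / 4)) := by
      intro m τ' n
      simp only [ite_mul, mul_ite, one_mul, zero_mul, mul_one, mul_zero,
        Finset.sum_ite_eq, Finset.sum_ite_eq', Finset.mem_univ, if_true]
      rw [Finset.sum_comm]
      refine Finset.sum_congr rfl fun a _ => ?_
      split <;> simp
    simp only [pairPayoff, pairM]
    rw [Finset.sum_image (fun q hq q' hq' heq => by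
      obtain ⟨i, j, k, l⟩ := q
      obtain ⟨i', j', k', l'⟩ := q'
      simp only [Finset.mem_coe, Finset.mem_filter] at hq hq'
      obtain ⟨rfl, rfl, rfl, rfl⟩ := pair_rel_aux hq.2 hq'.2 heq
      rfl)]
    have step : ∀ q ∈ ((Finset.univ : Finset (Fin d × Fin d × Fin 2 × Fin 2)).filter
        (fun q => q.1 < q.2.1)),
        (∑ pt ∈ ({(q.1, q.2.2.1), (q.2.1, q.2.2.2)} : Finset (Fin d × Fin 2)),
          (1 / (2 * (d:ℝ) * ((d:ℝ) - 1))) *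
            (∑ x : Fin X, ∑ a : Fin 2, ∑ y : Fin d, ∑ b : Fin 2,
              (if x = (sel ({(q.1, q.2.2.1), (q.2.1, q.2.2.2)} : Finset (Fin d × Fin 2))).1
                  then (1:ℝ) else 0) *
              (if pt.1 = (if a = (sel ({(q.1, q.2.2.1), (q.2.1, q.2.2.2)}
                    : Finset (Fin d × Fin 2))).2.1
                  then (sel ({(q.1, q.2.2.1), (q.2.1, q.2.2.2)}
                    : Finset (Fin d × Fin 2))).2.2.1
                  else (sel ({(q.1, q.2.2.1), (q.2.1, q.2.2.2)}
                    : Finset (Fin d × Fin 2))).2.2.2) then 1 else 0) *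
              (if y = pt.1 then 1 else 0) *
              (p * Pstar x y a b + (1 - p) * (1 / 4)) *
              (if pt.2 = b then 1 else 0)))
        = (1 / (2 * (d:ℝ) * ((d:ℝ) - 1))) * (p + (1 - p) / 2) := by
      rintro ⟨i, j, k, l⟩ hq
      have hij : i < j := (Finset.mem_filter.mp hq).2
      have hne : i ≠ j := ne_of_lt hij
      have hne' : j ≠ i := hne.symm
      obtain ⟨hI, hJ, hPi, hPj⟩ := hsel ({(i, k), (j, l)} : Finset (Fin d × Fin 2))
        i j k l hij rfl
      have hnm : ((i, k) : Fin d × Fin 2) ∉ ({(j, l)} : Finset (Fin d × Fin 2)) := by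
        simp only [Finset.mem_singleton]
        exact fun h => hne (congrArg Prod.fst h)
      rw [Finset.sum_insert hnm, Finset.sum_singleton]
      rw [hN, hN, hI, hJ]
      rw [Fin.sum_univ_two, Fin.sum_univ_two]
      have h2 : (sel ({(i, k), (j, l)} : Finset (Fin d × Fin 2))).2.1 = 0 ∨
          (sel ({(i, k), (j, l)} : Finset (Fin d × Fin 2))).2.1 = 1 := by omega
      rcases h2 with ha | ha <;> rw [ha] at hPi hPj ⊢
      · rw [show ((0:Fin 2) + 1) = 1 from rfl] at hPj
        rw [hPi, hPj]
        norm_num [hne, hne']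
        ring
      · rw [show ((1:Fin 2) + 1) = 0 from rfl] at hPj
        rw [hPi, hPj]
        norm_num [hne, hne']
        ring
    rw [Finset.sum_congr rfl step, Finset.sum_const, pair_rel_card, nsmul_eq_mul]
    have h1 : d ≤ d * d := Nat.le_mul_of_pos_left d (by omega)
    rw [Nat.cast_mul, Nat.cast_sub h1, Nat.cast_mul, Nat.cast_ofNat]
    have hd0 : (d : ℝ) ≠ 0 := by linarith
    have hd1 : (d : ℝ) - 1 ≠ 0 := by intro h; linarith
    field_simp
  · linarith
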